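/- Let L ≥ 3 be an odd integer. Let H be a linear s-uniform hypergraph on a vertex set V, let G be a graph on V with an injective map h from the edge set of G to the hyperedges of H such that both endpoints of each edge e of G lie in h(e), and let Γ be a graph on V. Let the edges of Γ be colored with k colors. Suppose Q = v_0 v_1 … v_{ℓ−1} is a good cycle of length ℓ in G such that for every edge v_i v_{i+1} of Q there is a cycle D_i of length L in Γ, all of whose vertices lie in h(v_i v_{i+1}), on which v_i and v_{i+1} are at distance (L−1)/2, and such that all edges of all the cycles D_i receive the same color. Then for every integer t with (L−1)ℓ/2 ≤ t ≤ (L+1)ℓ/2, Γ contains a monochromatic cycle of length t. -/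

import Mathlib

open SimpleGraph

/-- A path (walk) `P` in `G` is good with respect to the hypergraph `H` and the
assignment `h` of hyperedges to edges. -/
def IsGoodPath {V : Type*} [DecidableEq V] (H : Set (Finset V))
    {G : SimpleGraph V} (h : Sym2 V → Finset V) {u v : V} (P : G.Walk u v) : Prop :=
  (∀ e ∈ P.edges, ∀ e' ∈ P.edges, e ≠ e' →
      ∀ x : V, (x ∈ h e ∧ x ∈ h e') ↔ (x ∈ e ∧ x ∈ e')) ∧
  (∀ f ∈ H, (∀ e ∈ P.edges, f ≠ h e) →
      ∀ x y : V, x ∈ f → y ∈ f →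
        (∃ e ∈ P.edges, x ∈ h e) → (∃ e' ∈ P.edges, y ∈ h e') → x = y)

/-- A cycle `Q` in `G` is good if every pair of its edges is contained in a good
subpath of `Q` (a subpath being an initial segment of a rotation of `Q`). -/
def IsGoodCycle {V : Type*} [DecidableEq V] (H : Set (Finset V))
    {G : SimpleGraph V} (h : Sym2 V → Finset V) {v : V} (Q : G.Walk v v) : Prop :=
  Q.IsCycle ∧
  ∀ e ∈ Q.edges, ∀ e' ∈ Q.edges,
    ∃ (a : V) (ha : a ∈ Q.support) (b : V) (hb : b ∈ (Q.rotate a ha).support),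
      ((Q.rotate a ha).takeUntil b hb).IsPath ∧
      IsGoodPath H h ((Q.rotate a ha).takeUntil b hb) ∧
      e ∈ ((Q.rotate a ha).takeUntil b hb).edges ∧
      e' ∈ ((Q.rotate a ha).takeUntil b hb).edges



section AuxLemmas

variable {V : Type} [DecidableEq V]

/-- Every member of an edge of a walk is in the support. -/
lemma aux_mem_support_of_mem_edge {G : SimpleGraph V} {u w : V} {p : G.Walk u w}
    {e : Sym2 V} (he : e ∈ p.edges) {z : V} (hz : z ∈ e) : z ∈ p.support := by
  induction e using Sym2.ind with
  | _ a b =>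
    rcases Sym2.mem_iff.1 hz with rfl | rfl
    · exact p.fst_mem_support_of_mem_edges he
    · exact p.snd_mem_support_of_mem_edges he

/-- A non-nil walk has an edge containing its endpoint. -/
lemma aux_exists_edge_end {G : SimpleGraph V} :
    ∀ {u w : V} (W : G.Walk u w), ¬ W.Nil → ∃ e ∈ W.edges, w ∈ e := by
  intro u w W
  induction W with
  | nil => intro hn; simp at hn
  | @cons u u₁ w hadj W₁ ih =>
    intro _
    by_cases hnil : W₁.Nil
    · have h0 : W₁.length = 0 := Walk.nil_iff_length_eq.1 hnil
      have h1 : u₁ = w := by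
        have h2 := W₁.getVert_length
        rw [h0, Walk.getVert_zero] at h2
        exact h2
      subst h1
      exact ⟨s(u, u₁), by simp, by simp⟩
    · obtain ⟨e, he, hw⟩ := ih hnil
      exact ⟨e, by simp [he], hw⟩

/-- Take the first `n` steps of a walk. -/
lemma aux_walk_take {Γ : SimpleGraph V} :
    ∀ {u w : V} (p : Γ.Walk u w) (n : ℕ), n ≤ p.length →
    ∃ q : Γ.Walk u (p.getVert n), q.length = n ∧ q.support <+: p.support ∧
      q.edges ⊆ p.edges := by
  intro u w p n
  induction n generalizing u w p with
  | zero =>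
    intro _
    refine ⟨Walk.nil.copy rfl (p.getVert_zero).symm, by simp, ?_, by simp⟩
    simp only [Walk.support_copy, Walk.support_nil]
    exact ⟨p.support.tail, (p.support_eq_cons).symm⟩
  | succ n ih =>
    intro hn
    cases p with
    | nil => simp at hn
    | @cons u u₁ w hadj p₁ =>
      obtain ⟨q, hql, hqs, hqe⟩ := ih p₁ (by simpa using hn)
      refine ⟨Walk.cons hadj q, by simp [hql], ?_, ?_⟩
      · obtain ⟨tl, htl⟩ := hqs
        exact ⟨tl, by simp [htl]⟩
      · intro e he
        simp only [Walk.edges_cons, List.mem_cons] at he ⊢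
        rcases List.mem_cons.1 (show e ∈ s(u, u₁) :: q.edges by simpa using he) with h' | h'
        · simp [h']
        · simp [hqe h']

/-- For a cycle, the support with the last vertex removed has no duplicates. -/
lemma aux_cycle_dropLast_nodup {Γ : SimpleGraph V} {x : V} {D : Γ.Walk x x}
    (hD : D.IsCycle) : D.support.dropLast.Nodup := by
  have htne : D.support.tail ≠ [] := by
    intro h
    have h0 : D.support.tail.length = 0 := by rw [h]; rfl
    rw [List.length_tail, D.length_support] at h0
    have := hD.three_le_length
    omega
  have hlast : D.support.tail.getLast htne = x := by
    rw [List.getLast_tail]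
    exact D.getLast_support
  have hsplit : D.support.tail = D.support.tail.dropLast ++ [x] := by
    conv_lhs => rw [← List.dropLast_append_getLast htne]
    rw [hlast]
  have hnd := hD.support_nodup
  rw [hsplit, List.nodup_append] at hnd
  have hx : x ∉ D.support.tail.dropLast := fun hx => hnd.2.2 x hx x (by simp) rfl
  have : D.support.dropLast = x :: D.support.tail.dropLast := by
    conv_lhs => rw [D.support_eq_cons]
    exact List.dropLast_cons_of_ne_nil htne
  rw [this, List.nodup_cons]
  exact ⟨hx, hnd.1⟩

/-- dropLast of the reverse support of a cycle is nodup. -/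
lemma aux_cycle_reverse_dropLast_nodup {Γ : SimpleGraph V} {x : V} {D : Γ.Walk x x}
    (hD : D.IsCycle) : D.reverse.support.dropLast.Nodup := by
  have h1 : D.reverse.support.dropLast = D.support.tail.reverse := by
    have h2 := List.tail_reverse (l := D.support.reverse)
    rw [List.reverse_reverse] at h2
    rw [Walk.support_reverse, h2, List.reverse_reverse]
  rw [h1, List.nodup_reverse]
  exact hD.support_nodup

/-- Extract an initial-segment path of a trail whose support-minus-last is nodup. -/
lemma aux_arc_exists {Γ : SimpleGraph V} {x : V} (D : Γ.Walk x x)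
    (hnd : D.support.dropLast.Nodup) (n : ℕ) (hn : n < D.length) :
    ∃ q : Γ.Walk x (D.getVert n), q.IsPath ∧ q.length = n ∧
      (∀ z ∈ q.support, z ∈ D.support) ∧ (∀ e ∈ q.edges, e ∈ D.edges) := by
  obtain ⟨q, hql, hqs, hqe⟩ := aux_walk_take D n (le_of_lt hn)
  have hsupeq : q.support = D.support.take (n + 1) := by
    have := List.prefix_iff_eq_take.1 hqs
    rwa [q.length_support, hql] at this
  have hnodup : q.support.Nodup := by
    have hdl : D.support.dropLast = D.support.take D.length := by
      rw [List.dropLast_eq_take, D.length_support]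
      simp
    have hsub : q.support.Sublist D.support.dropLast := by
      rw [hsupeq, hdl]
      have : D.support.take (n + 1) = (D.support.take D.length).take (n + 1) := by
        rw [List.take_take]
        congr 1
        omega
      rw [this]
      exact List.take_sublist _ _
    exact hnd.sublist hsub
  exact ⟨q, (Walk.isPath_def q).2 hnodup, hql, fun z hz => hqs.subset hz, hqe⟩

end AuxLemmas

section Build

variable {V : Type} [DecidableEq V]

/-- The key construction: replace every edge of a path `W` in `G` by an arc (of length
`m` or `m+1`) inside its hyperedge, obtaining a path in `Γ`. -/
lemma aux_build {G Γ : SimpleGraph V} (h : Sym2 V → Finset V) {α : Type} (c : Sym2 V → α)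
    (κ : α) (m : ℕ) (S : Set (Sym2 V))
    (HC : ∀ e ∈ S, ∀ x : V, x ∈ e → x ∈ h e)
    (P2 : ∀ e ∈ S, ∀ e' ∈ S, e ≠ e' → ∀ z : V, z ∈ h e → z ∈ h e' → z ∈ e ∧ z ∈ e')
    (AR : ∀ x y : V, s(x, y) ∈ S → ∀ r : ℕ, (r = m ∨ r = m + 1) →
      ∃ p : Γ.Walk x y, p.IsPath ∧ p.length = r ∧ (∀ z ∈ p.support, z ∈ h s(x, y)) ∧
        (∀ q ∈ p.edges, c q = κ)) :
    ∀ {u w : V} (W : G.Walk u w), W.IsPath → (∀ e ∈ W.edges, e ∈ S) →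
    ∀ n, n ≤ W.length →
    ∃ P : Γ.Walk u w, P.IsPath ∧ P.length = m * W.length + n ∧
      (∀ z ∈ P.support, z = w ∨ ∃ e ∈ W.edges, z ∈ h e) ∧
      (∀ q ∈ P.edges, ∃ e ∈ W.edges, ∀ z : V, z ∈ q → z ∈ h e) ∧
      (∀ q ∈ P.edges, c q = κ) := by
  intro u w W
  induction W with
  | nil =>
    intro _ _ n hn
    have hn0 : n = 0 := by simpa using hn
    subst hn0
    exact ⟨Walk.nil, by simp, by simp, by simp, by simp, by simp⟩
  | @cons u u₁ w hadj W₁ ih =>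
    intro hW hWS n hn
    have hW₁ : W₁.IsPath := hW.of_cons
    have hu : u ∉ W₁.support := ((Walk.cons_isPath_iff _ _).1 hW).2
    have he₀S : s(u, u₁) ∈ S := hWS _ (by simp)
    have he₀notin : s(u, u₁) ∉ W₁.edges := fun hc =>
      hu (W₁.fst_mem_support_of_mem_edges hc)
    obtain ⟨r, n₁, hr, hn₁, hsum⟩ : ∃ r n₁, (r = m ∨ r = m + 1) ∧ n₁ ≤ W₁.length ∧
        r + (m * W₁.length + n₁) = m * (W₁.length + 1) + n := by
      by_cases hcase : n ≤ W₁.length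
      · exact ⟨m, n, Or.inl rfl, hcase, by ring⟩
      · have hn' : n = W₁.length + 1 := by
          have := hn
          simp only [Walk.length_cons] at this
          omega
        exact ⟨m + 1, W₁.length, Or.inr rfl, le_refl _, by subst hn'; ring⟩
    obtain ⟨arc, harcp, harclen, harcsup, harccol⟩ := AR u u₁ he₀S r hr
    obtain ⟨P₁, hP₁p, hP₁len, hP₁sup, hP₁edge, hP₁col⟩ :=
      ih hW₁ (fun e he => hWS e (by simp [he])) n₁ hn₁
    -- the key disjointness claim
    have key : ∀ z : V, z ∈ arc.support → z ∈ P₁.support → z = u₁ := by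
      intro z hz1 hz2
      have hzh : z ∈ h s(u, u₁) := harcsup z hz1
      rcases hP₁sup z hz2 with rfl | ⟨e, heW, hzhe⟩
      · by_cases hnil : W₁.Nil
        · have h0 : W₁.length = 0 := Walk.nil_iff_length_eq.1 hnil
          have h1 := W₁.getVert_length
          rw [h0, Walk.getVert_zero] at h1
          exact h1.symm
        · obtain ⟨e, heW, hwe⟩ := aux_exists_edge_end W₁ hnil
          have heS : e ∈ S := hWS e (by simp [heW])
          have hne : s(u, u₁) ≠ e := fun hc => he₀notin (hc ▸ heW)
          have hz' := P2 _ he₀S _ heS hne z hzh (HC e heS z hwe)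
          rcases Sym2.mem_iff.1 hz'.1 with rfl | rfl
          · exact absurd (W₁.end_mem_support) hu
          · rfl
      · have heS : e ∈ S := hWS e (by simp [heW])
        have hne : s(u, u₁) ≠ e := fun hc => he₀notin (hc ▸ heW)
        have hz' := P2 _ he₀S _ heS hne z hzh hzhe
        rcases Sym2.mem_iff.1 hz'.1 with rfl | rfl
        · exact absurd (aux_mem_support_of_mem_edge heW hz'.2) hu
        · rfl
    have hu₁tail : u₁ ∉ P₁.support.tail := by
      have := (Walk.isPath_def _).1 hP₁p
      rw [P₁.support_eq_cons] at this
      exact (List.nodup_cons.1 this).1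
    refine ⟨arc.append P₁, ?_, ?_, ?_, ?_, ?_⟩
    · rw [Walk.isPath_def, Walk.support_append]
      refine List.Nodup.append ((Walk.isPath_def _).1 harcp)
        (((Walk.isPath_def _).1 hP₁p).sublist (List.tail_sublist _)) ?_
      intro z hz1 hz2
      have hz2' : z ∈ P₁.support := List.mem_of_mem_tail hz2
      have := key z hz1 hz2'
      subst this
      exact hu₁tail hz2
    · rw [Walk.length_append, Walk.length_cons, harclen, hP₁len]
      exact hsum
    · intro z hz
      rcases (Walk.mem_support_append_iff _ _).1 hz with hz | hz
      · exact Or.inr ⟨s(u, u₁), by simp, harcsup z hz⟩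
      · rcases hP₁sup z hz with rfl | ⟨e, he, hh⟩
        · exact Or.inl rfl
        · exact Or.inr ⟨e, by simp [he], hh⟩
    · intro q hq
      rw [Walk.edges_append, List.mem_append] at hq
      rcases hq with hq | hq
      · exact ⟨s(u, u₁), by simp, fun z hz =>
          harcsup z (aux_mem_support_of_mem_edge hq hz)⟩
      · obtain ⟨e, he, hh⟩ := hP₁edge q hq
        exact ⟨e, by simp [he], hh⟩
    · intro q hq
      rw [Walk.edges_append, List.mem_append] at hq
      rcases hq with hq | hq
      · exact harccol q hq
      · exact hP₁col q hq

end Build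

/-- Lemma 5.6 part 3) of the paper: let `L ≥ 3` be odd. Given a good cycle of length
`ℓ` in the auxiliary graph `G`, each of whose edges comes from a monochromatic
`L`-cycle (of one common color) inside its assigned hyperedge with the two endpoints
at distance `(L-1)/2` on that `L`-cycle, the graph `Γ` contains a monochromatic cycle
of length `t` for every `t` with `(L-1)ℓ/2 ≤ t ≤ (L+1)ℓ/2`. -/
theorem good_cycle_to_cycle_noninduced {V : Type} [DecidableEq V] (s k L : ℕ)
    (hL : 3 ≤ L) (hLodd : Odd L)
    (H : Set (Finset V))
    (huniform : ∀ e ∈ H, e.card = s)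
    (hlinear : ∀ e ∈ H, ∀ f ∈ H, e ≠ f → (e ∩ f).card ≤ 1)
    (G : SimpleGraph V) (h : Sym2 V → Finset V)
    (hmem : ∀ e ∈ G.edgeSet, h e ∈ H ∧ ∀ x ∈ e, x ∈ h e)
    (hinj : Set.InjOn h G.edgeSet)
    (Γ : SimpleGraph V)
    (c : Sym2 V → Fin k)
    (v : V) (Q : G.Walk v v) (ℓ : ℕ) (hℓ : Q.length = ℓ)
    (hQ : IsGoodCycle H h Q)
    (κ : Fin k)
    (hD : ∀ x y : V, s(x, y) ∈ Q.edges →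
      ∃ D : Γ.Walk x x, D.IsCycle ∧ D.length = L ∧ D.getVert ((L - 1) / 2) = y ∧
        (∀ z ∈ D.support, z ∈ h s(x, y)) ∧
        (∀ p ∈ D.edges, c p = κ))
    (t : ℕ) (ht1 : (L - 1) * ℓ ≤ 2 * t) (ht2 : 2 * t ≤ (L + 1) * ℓ) :
    ∃ (a : V) (W : Γ.Walk a a), W.IsCycle ∧ W.length = t ∧
      (∀ p ∈ W.edges, ∀ q ∈ W.edges, c p = c q) := by
  obtain ⟨j, hj⟩ := hLodd
  have hj1 : 1 ≤ j := by omega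
  -- the pairwise intersection property from goodness
  have P2 : ∀ e ∈ {e | e ∈ Q.edges}, ∀ e' ∈ {e | e ∈ Q.edges}, e ≠ e' →
      ∀ z : V, z ∈ h e → z ∈ h e' → z ∈ e ∧ z ∈ e' := by
    intro e he e' he' hne z hz hz'
    obtain ⟨a, ha, b, hb, hpath, hgood, hein, he'in⟩ := hQ.2 e he e' he'
    exact (hgood.1 e hein e' he'in hne z).1 ⟨hz, hz'⟩
  have HC : ∀ e ∈ {e | e ∈ Q.edges}, ∀ x : V, x ∈ e → x ∈ h e := by
    intro e he x hx
    exact (hmem e (Q.edges_subset_edgeSet he)).2 x hx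
  -- the arcs from the cycles D
  have AR : ∀ x y : V, s(x, y) ∈ {e | e ∈ Q.edges} → ∀ r : ℕ, (r = j ∨ r = j + 1) →
      ∃ p : Γ.Walk x y, p.IsPath ∧ p.length = r ∧ (∀ z ∈ p.support, z ∈ h s(x, y)) ∧
        (∀ q ∈ p.edges, c q = κ) := by
    intro x y hxy r hr
    obtain ⟨D, hDc, hDlen, hDy, hDsup, hDcol⟩ := hD x y hxy
    have hjy : D.getVert j = y := by
      rwa [show (L - 1) / 2 = j by omega] at hDy
    rcases hr with hr | hr
    · obtain ⟨q, hqp, hql, hqs, hqe⟩ := aux_arc_exists D (aux_cycle_dropLast_nodup hDc) j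
        (by rw [hDlen]; omega)
      refine ⟨q.copy rfl hjy, by simpa using hqp, by simp [hql, hr], ?_, ?_⟩
      · intro z hz
        rw [Walk.support_copy] at hz
        exact hDsup z (hqs z hz)
      · intro q' hq'
        rw [Walk.edges_copy] at hq'
        exact hDcol q' (hqe q' hq')
    · have hrevVert : D.reverse.getVert (j + 1) = y := by
        rw [Walk.getVert_reverse, hDlen, show L - (j + 1) = j by omega, hjy]
      obtain ⟨q, hqp, hql, hqs, hqe⟩ := aux_arc_exists D.reverse
        (aux_cycle_reverse_dropLast_nodup hDc) (j + 1)
        (by rw [Walk.length_reverse, hDlen]; omega)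
      refine ⟨q.copy rfl hrevVert, by simpa using hqp, by simp [hql, hr], ?_, ?_⟩
      · intro z hz
        rw [Walk.support_copy] at hz
        have := hqs z hz
        rw [Walk.support_reverse, List.mem_reverse] at this
        exact hDsup z this
      · intro q' hq'
        rw [Walk.edges_copy] at hq'
        have := hqe q' hq'
        rw [Walk.edges_reverse, List.mem_reverse] at this
        exact hDcol q' this
  have hℓ3 : 3 ≤ ℓ := hℓ ▸ hQ.1.three_le_length
  -- arithmetic: t = j * ℓ + a with a ≤ ℓ
  have h1 : j * ℓ ≤ t := by
    have e1 : (L - 1) * ℓ = 2 * (j * ℓ) := by rw [show L - 1 = 2 * j by omega]; ring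
    rw [e1] at ht1
    exact Nat.le_of_mul_le_mul_left ht1 two_pos
  have h2 : t ≤ j * ℓ + ℓ := by
    have e2 : (L + 1) * ℓ = 2 * (j * ℓ + ℓ) := by rw [hj]; ring
    rw [e2] at ht2
    exact Nat.le_of_mul_le_mul_left ht2 two_pos
  obtain ⟨a, hta, haℓ⟩ : ∃ a, t = j * ℓ + a ∧ a ≤ ℓ :=
    ⟨t - j * ℓ, (Nat.add_sub_cancel' h1).symm, by
      rw [Nat.sub_le_iff_le_add]; omega⟩
  have ht3 : 3 ≤ t := le_trans (by calc (3:ℕ) = 1 * 3 := by ring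
    _ ≤ j * ℓ := Nat.mul_le_mul hj1 hℓ3) h1
  cases Q with
  | nil => simpa using hQ.1.three_le_length
  | @cons v v₁ v' hadj W₁ =>
    have hcyc := hQ.1
    rw [Walk.cons_isCycle_iff] at hcyc
    obtain ⟨hW₁path, he₀notin⟩ := hcyc
    have hℓcons : ℓ = W₁.length + 1 := by rw [← hℓ]; simp
    obtain ⟨r, n₁, hr, hn₁, hsum⟩ : ∃ r n₁, (r = j ∨ r = j + 1) ∧ n₁ ≤ W₁.length ∧
        r + (j * W₁.length + n₁) = t := by
      rcases Nat.lt_or_ge a (W₁.length + 1) with hc | hc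
      · exact ⟨j, a, Or.inl rfl, by omega, by rw [hta, hℓcons]; ring⟩
      · have ha' : a = W₁.length + 1 := by omega
        exact ⟨j + 1, W₁.length, Or.inr rfl, le_refl _, by rw [hta, ha', hℓcons]; ring⟩
    have he₀mem : s(v, v₁) ∈ {e | e ∈ (Walk.cons hadj W₁).edges} := by simp
    obtain ⟨arc₀, harcp, harclen, harcsup, harccol⟩ := AR v v₁ he₀mem r hr
    obtain ⟨P₁, hP₁p, hP₁len, hP₁sup, hP₁edge, hP₁col⟩ :=
      aux_build h c κ j {e | e ∈ (Walk.cons hadj W₁).edges} HC P2 AR W₁ hW₁path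
        (fun e he => by simp [he]) n₁ hn₁
    have key0 : ∀ z : V, z ∈ arc₀.support → z ∈ P₁.support → z = v₁ ∨ z = v := by
      intro z hz1 hz2
      have hzh : z ∈ h s(v, v₁) := harcsup z hz1
      rcases hP₁sup z hz2 with rfl | ⟨e, heW, hzhe⟩
      · exact Or.inr rfl
      · have heS : e ∈ {e | e ∈ (Walk.cons hadj W₁).edges} := by simp [heW]
        have hne : s(v, v₁) ≠ e := fun hc => he₀notin (hc ▸ heW)
        have hz' := P2 _ he₀mem _ heS hne z hzh hzhe
        rcases Sym2.mem_iff.1 hz'.1 with rfl | rfl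
        · exact Or.inr rfl
        · exact Or.inl rfl
    have hP₁head : v₁ ∉ P₁.support.tail := by
      have := (Walk.isPath_def _).1 hP₁p
      rw [P₁.support_eq_cons] at this
      exact (List.nodup_cons.1 this).1
    have harchead : v ∉ arc₀.support.tail := by
      have := (Walk.isPath_def _).1 harcp
      rw [arc₀.support_eq_cons] at this
      exact (List.nodup_cons.1 this).1
    have hlenC : (arc₀.append P₁).length = t := by
      rw [Walk.length_append, harclen, hP₁len, hsum]
    refine ⟨v, arc₀.append P₁, ?_, hlenC, ?_⟩
    · rw [Walk.isCycle_def]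
      refine ⟨?_, ?_, ?_⟩
      · -- trail
        rw [Walk.isTrail_def, Walk.edges_append]
        refine List.Nodup.append harcp.isTrail.edges_nodup hP₁p.isTrail.edges_nodup ?_
        intro q hq1 hq2
        induction q using Sym2.ind with
        | _ x y =>
          have hxy : x ≠ y := (Γ.mem_edgeSet.1 (arc₀.edges_subset_edgeSet hq1)).ne
          have hx1 : x ∈ h s(v, v₁) := harcsup x (arc₀.fst_mem_support_of_mem_edges hq1)
          have hy1 : y ∈ h s(v, v₁) := harcsup y (arc₀.snd_mem_support_of_mem_edges hq1)
          obtain ⟨e, heW, hall⟩ := hP₁edge _ hq2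
          have heS : e ∈ {e | e ∈ (Walk.cons hadj W₁).edges} := by simp [heW]
          have hne : s(v, v₁) ≠ e := fun hc => he₀notin (hc ▸ heW)
          have hx := P2 _ he₀mem _ heS hne x hx1 (hall x (Sym2.mem_mk_left x y))
          have hy := P2 _ he₀mem _ heS hne y hy1 (hall y (Sym2.mem_mk_right x y))
          have h8 : s(v, v₁) = s(x, y) := (Sym2.mem_and_mem_iff hxy).1 ⟨hx.1, hy.1⟩
          have h9 : e = s(x, y) := (Sym2.mem_and_mem_iff hxy).1 ⟨hx.2, hy.2⟩
          exact hne (h8.trans h9.symm)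
      · -- not nil
        intro hC
        rw [hC] at hlenC
        simp at hlenC
        omega
      · -- support tail nodup
        have hsupC : (arc₀.append P₁).support.tail =
            arc₀.support.tail ++ P₁.support.tail := by
          rw [Walk.support_append]
          conv_lhs => rw [arc₀.support_eq_cons]
          rw [List.cons_append, List.tail_cons]
        rw [hsupC]
        refine List.Nodup.append
          (((Walk.isPath_def _).1 harcp).sublist (List.tail_sublist _))
          (((Walk.isPath_def _).1 hP₁p).sublist (List.tail_sublist _)) ?_
        intro z hz1 hz2
        rcases key0 z (List.mem_of_mem_tail hz1) (List.mem_of_mem_tail hz2) with rfl | rfl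
        · exact hP₁head hz2
        · exact harchead hz1
    · intro p hp q hq
      rw [Walk.edges_append, List.mem_append] at hp hq
      have hcp : c p = κ := by
        rcases hp with hp | hp
        · exact harccol p hp
        · exact hP₁col p hp
      have hcq : c q = κ := by
        rcases hq with hq | hq
        · exact harccol q hq
        · exact hP₁col q hq
      rw [hcp, hcq]
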